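/- Let (ρ₋, E₋) be an incoming supersonic solution on [0, T] whose Mach number satisfies (M₋²)'(t) > 0 for 0 < t < T. For t_s ∈ (0, T), let κ_s(t_s) := p_s(t_s)/ρ_s(t_s)^γ be the entropy constant of the Rankine–Hugoniot downstream state of (ρ₋, u₋, p₋, E₋)(t_s). Then κ_s(t_s) > κ0 and dκ_s(t_s)/dt_s > 0 for all t_s ∈ (0, T). -/

import Mathlib

open Real Set

/-- The right-hand side `g1(t, ρ, E, κ)` of the density equation of the reduced
radial Euler–Poisson system (with `t̂ = r0 − t` and mass flux `m0`). -/
noncomputable def g1 (γ r0 m0 κ t ρv Ev : ℝ) : ℝ :=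
  ρv * ((r0 - t) * Ev - m0 ^ 2 / ((r0 - t) ^ 2 * ρv ^ 2)) /
    ((r0 - t) * (γ * κ * ρv ^ (γ - 1) - m0 ^ 2 / ((r0 - t) ^ 2 * ρv ^ 2)))

/-- The right-hand side `g2(t, ρ, E) = t̂·(ρ − b(t))` of the electric-field equation. -/
noncomputable def g2 (r0 t ρv bv : ℝ) : ℝ := (r0 - t) * (ρv - bv)

/-- `(ρ, E)` is a (C¹) solution of the reduced radial Euler–Poisson system with
entropy constant `κ` on the set `I`: `ρ > 0`, `ρ' = g1(t, ρ, E, κ)` and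
`(t̂·E)' = g2(t, ρ, E)` on `I`. -/
def EPsol (γ r0 m0 κ : ℝ) (b ρ E : ℝ → ℝ) (I : Set ℝ) : Prop :=
  (∀ t ∈ I, 0 < ρ t) ∧
  (∀ t ∈ I, HasDerivAt ρ (g1 γ r0 m0 κ t (ρ t) (E t)) t) ∧
  (∀ t ∈ I, HasDerivAt (fun s => (r0 - s) * E s) (g2 r0 t (ρ t) (b t)) t)

/-- The associated velocity `u = m0/(t̂·ρ)`. -/
noncomputable def uA (r0 m0 : ℝ) (ρ : ℝ → ℝ) (t : ℝ) : ℝ := m0 / ((r0 - t) * ρ t)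

/-- The associated pressure `p = κ·ρ^γ`. -/
noncomputable def pA (γ κ : ℝ) (ρ : ℝ → ℝ) (t : ℝ) : ℝ := κ * ρ t ^ γ

/-- The associated squared Mach number `M² = ρ·u²/(γ·p)`. -/
noncomputable def MsqA (γ r0 m0 κ : ℝ) (ρ : ℝ → ℝ) (t : ℝ) : ℝ :=
  ρ t * uA r0 m0 ρ t ^ 2 / (γ * pA γ κ ρ t)

/-- The associated Bernoulli function `B = u²/2 + γ·p/((γ−1)·ρ)`. -/
noncomputable def BA (γ r0 m0 κ : ℝ) (ρ : ℝ → ℝ) (t : ℝ) : ℝ :=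
  uA r0 m0 ρ t ^ 2 / 2 + γ * pA γ κ ρ t / ((γ - 1) * ρ t)

/-- `K₋ = (2(γ−1)/(γ+1))·B₋` of the Rankine–Hugoniot jump at time `t` along the
incoming solution `ρm` (with entropy constant `κ0`). -/
noncomputable def KsA (γ r0 m0 κ0 : ℝ) (ρm : ℝ → ℝ) (t : ℝ) : ℝ :=
  2 * (γ - 1) / (γ + 1) * BA γ r0 m0 κ0 ρm t

/-- Downstream density `ρ_s = ρ₋u₋²/K₋` of the Rankine–Hugoniot jump at `t`. -/
noncomputable def ρsA (γ r0 m0 κ0 : ℝ) (ρm : ℝ → ℝ) (t : ℝ) : ℝ :=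
  ρm t * uA r0 m0 ρm t ^ 2 / KsA γ r0 m0 κ0 ρm t

/-- Downstream velocity `u_s = K₋/u₋` of the Rankine–Hugoniot jump at `t`. -/
noncomputable def usA (γ r0 m0 κ0 : ℝ) (ρm : ℝ → ℝ) (t : ℝ) : ℝ :=
  KsA γ r0 m0 κ0 ρm t / uA r0 m0 ρm t

/-- Downstream pressure `p_s = ρ₋u₋² + p₋ − ρ₋K₋` of the Rankine–Hugoniot jump at `t`. -/
noncomputable def psA (γ r0 m0 κ0 : ℝ) (ρm : ℝ → ℝ) (t : ℝ) : ℝ :=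
  ρm t * uA r0 m0 ρm t ^ 2 + pA γ κ0 ρm t - ρm t * KsA γ r0 m0 κ0 ρm t

/-- Downstream entropy constant `κ_s = p_s/ρ_s^γ` of the Rankine–Hugoniot jump at `t`. -/
noncomputable def κsA (γ r0 m0 κ0 : ℝ) (ρm : ℝ → ℝ) (t : ℝ) : ℝ :=
  psA γ r0 m0 κ0 ρm t / ρsA γ r0 m0 κ0 ρm t ^ γ

/-- `(ρm, Em)` is an incoming supersonic solution on `[0, T]`:
it solves the reduced Euler–Poisson system with entropy constant `κ0`,
starts from `(ρ0, E0)` and is supersonic throughout. -/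
def IncSol (γ r0 m0 κ0 ρ0 E0 T : ℝ) (b ρm Em : ℝ → ℝ) : Prop :=
  EPsol γ r0 m0 κ0 b ρm Em (Icc 0 T) ∧ ρm 0 = ρ0 ∧ Em 0 = E0 ∧
  ∀ t ∈ Icc 0 T, 1 < MsqA γ r0 m0 κ0 ρm t

/-- `(ρp, Ep)` is a downstream subsonic solution on `[ts, T]` behind a shock at `ts`:
it solves the reduced Euler–Poisson system with entropy constant `κ_s(ts)`, starts from
the Rankine–Hugoniot downstream state of the incoming solution `(ρm, Em)` at `ts`,
and satisfies `0 < M₊ < 1` on `[ts, T]`. -/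
def DownSol (γ r0 m0 κ0 T : ℝ) (b ρm Em : ℝ → ℝ) (ts : ℝ) (ρp Ep : ℝ → ℝ) : Prop :=
  EPsol γ r0 m0 (κsA γ r0 m0 κ0 ρm ts) b ρp Ep (Icc ts T) ∧
  ρp ts = ρsA γ r0 m0 κ0 ρm ts ∧ Ep ts = Em ts ∧
  ∀ t ∈ Icc ts T, 0 < MsqA γ r0 m0 (κsA γ r0 m0 κ0 ρm ts) ρp t ∧
    MsqA γ r0 m0 (κsA γ r0 m0 κ0 ρm ts) ρp t < 1

/-- The Rankine–Hugoniot entropy ratio as a function of the squared Mach number. -/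
noncomputable def fRH (γ m : ℝ) : ℝ :=
  (2 * γ * m - (γ - 1)) / (γ + 1) * (((γ - 1) * m + 2) / ((γ + 1) * m)) ^ γ

lemma fRH_one (γ : ℝ) (hγ : 1 < γ) : fRH γ 1 = 1 := by
  have h1 : γ + 1 ≠ 0 := by linarith
  unfold fRH
  rw [show 2 * γ * 1 - (γ - 1) = γ + 1 by ring, show (γ - 1) * 1 + 2 = γ + 1 by ring,
    mul_one, div_self h1, Real.one_rpow]
  norm_num

lemma fRH_hasDerivAt (γ m : ℝ) (hγ : 1 < γ) (hm : 0 < m) :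
    HasDerivAt (fRH γ)
      ((((γ - 1) * m + 2) / ((γ + 1) * m)) ^ (γ - 1) * (2 * γ * (γ - 1) * (m - 1) ^ 2) /
        ((γ + 1) * m) ^ 2) m := by
  have hA : 0 < (γ - 1) * m + 2 := by nlinarith
  have hD : 0 < (γ + 1) * m := by nlinarith
  have hq : 0 < ((γ - 1) * m + 2) / ((γ + 1) * m) := div_pos hA hD
  have h1 : HasDerivAt (fun x => (2 * γ * x - (γ - 1)) / (γ + 1)) (2 * γ / (γ + 1)) m := by
    simpa using (((hasDerivAt_id m).const_mul (2 * γ)).sub_const (γ - 1)).div_const (γ + 1)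
  have hq' : HasDerivAt (fun x => ((γ - 1) * x + 2) / ((γ + 1) * x))
      (-(2 * (γ + 1)) / ((γ + 1) * m) ^ 2) m := by
    have hnum : HasDerivAt (fun x => (γ - 1) * x + 2) (γ - 1) m := by
      simpa using ((hasDerivAt_id m).const_mul (γ - 1)).add_const 2
    have hden : HasDerivAt (fun x => (γ + 1) * x) (γ + 1) m := by
      simpa using (hasDerivAt_id m).const_mul (γ + 1)
    have h := hnum.div hden (ne_of_gt hD)
    refine h.congr_deriv ?_
    field_simp
    ring
  have h2 : HasDerivAt (fun x => (((γ - 1) * x + 2) / ((γ + 1) * x)) ^ γ)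
      ((-(2 * (γ + 1)) / ((γ + 1) * m) ^ 2) * γ *
        (((γ - 1) * m + 2) / ((γ + 1) * m)) ^ (γ - 1)) m :=
    hq'.rpow_const (Or.inl (ne_of_gt hq))
  have hf := h1.mul h2
  have hfRH : fRH γ = fun x =>
      (2 * γ * x - (γ - 1)) / (γ + 1) * (((γ - 1) * x + 2) / ((γ + 1) * x)) ^ γ := rfl
  rw [hfRH]
  refine hf.congr_deriv ?_
  have hqγ : (((γ - 1) * m + 2) / ((γ + 1) * m)) ^ γ =
      (((γ - 1) * m + 2) / ((γ + 1) * m)) ^ (γ - 1) *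
        (((γ - 1) * m + 2) / ((γ + 1) * m)) := by
    rw [← Real.rpow_add_one (ne_of_gt hq) (γ - 1)]
    norm_num
  rw [hqγ]
  generalize (((γ - 1) * m + 2) / ((γ + 1) * m)) ^ (γ - 1) = X
  have h1' : γ + 1 ≠ 0 := by linarith
  have hD' : (γ + 1) * m ≠ 0 := ne_of_gt hD
  field_simp
  ring

lemma fRH_gt_one (γ m : ℝ) (hγ : 1 < γ) (hm : 1 < m) : 1 < fRH γ m := by
  have hmono : StrictMonoOn (fRH γ) (Ici 1) := by
    apply strictMonoOn_of_deriv_pos (convex_Ici 1)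
    · intro x hx
      exact (fRH_hasDerivAt γ x hγ (by simp only [mem_Ici] at hx; linarith)).continuousAt.continuousWithinAt
    · intro x hx
      rw [interior_Ici, mem_Ioi] at hx
      have hx0 : 0 < x := by linarith
      rw [(fRH_hasDerivAt γ x hγ hx0).deriv]
      have hA : 0 < (γ - 1) * x + 2 := by nlinarith
      have hD : 0 < (γ + 1) * x := by nlinarith
      exact div_pos (mul_pos (Real.rpow_pos_of_pos (div_pos hA hD) _)
        (mul_pos (mul_pos (by linarith) (by linarith))
          (pow_pos (by linarith) 2))) (by positivity)
  have := hmono (self_mem_Ici) (by simp only [mem_Ici]; linarith) hm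
  rwa [fRH_one γ hγ] at this

/-- Core algebraic identity: the downstream entropy in terms of `fRH` of the Mach number. -/
lemma core_kappa (γ ρ u m p B K : ℝ) (hγ : 1 < γ) (hρ : 0 < ρ) (hu : 0 < u) (hm : 0 < m)
    (hp : p = ρ * u ^ 2 / (γ * m))
    (hB : B = u ^ 2 / 2 + γ * p / ((γ - 1) * ρ))
    (hK : K = 2 * (γ - 1) / (γ + 1) * B) :
    (ρ * u ^ 2 + p - ρ * K) / (ρ * u ^ 2 / K) ^ γ = p / ρ ^ γ * fRH γ m := by
  have hγ1 : (0:ℝ) < γ - 1 := by linarith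
  have hγp : (0:ℝ) < γ + 1 := by linarith
  have hγ0 : (0:ℝ) < γ := by linarith
  have hA : 0 < (γ - 1) * m + 2 := by nlinarith
  have hD : 0 < (γ + 1) * m := by nlinarith
  have hK' : K = u ^ 2 * ((γ - 1) * m + 2) / ((γ + 1) * m) := by
    subst hK hB hp
    field_simp
  have hKpos : 0 < K := by
    rw [hK']; exact div_pos (mul_pos (pow_pos hu 2) hA) hD
  have hbase : ρ * u ^ 2 / K = ρ * (((γ + 1) * m) / ((γ - 1) * m + 2)) := by
    rw [hK']; field_simp
  have hps : ρ * u ^ 2 + p - ρ * K =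
      p * ((2 * γ * m - (γ - 1)) / (γ + 1)) := by
    rw [hK', hp]; field_simp; ring
  rw [hps, hbase, Real.mul_rpow hρ.le (le_of_lt (div_pos hD hA))]
  unfold fRH
  rw [show (((γ - 1) * m + 2) / ((γ + 1) * m)) = (((γ + 1) * m) / ((γ - 1) * m + 2))⁻¹
      from (inv_div _ _).symm,
    Real.inv_rpow (le_of_lt (div_pos hD hA))]
  have hX : 0 < (((γ + 1) * m) / ((γ - 1) * m + 2)) ^ γ :=
    Real.rpow_pos_of_pos (div_pos hD hA) γ
  have hρX : 0 < (ρ:ℝ) ^ γ := Real.rpow_pos_of_pos hρ γ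
  field_simp

/-- The downstream entropy along the incoming solution equals `κ0 · fRH γ (M²)`. -/
lemma kappa_eq (γ r0 m0 κ0 : ℝ) (ρm : ℝ → ℝ) (t : ℝ) (hγ : 1 < γ)
    (hρ : 0 < ρm t) (hrt : 0 < r0 - t) (hm0 : 0 < m0) (hκ0 : 0 < κ0) :
    κsA γ r0 m0 κ0 ρm t = κ0 * fRH γ (MsqA γ r0 m0 κ0 ρm t) := by
  have hγ0 : (0:ℝ) < γ := by linarith
  have hu : 0 < uA r0 m0 ρm t := div_pos hm0 (mul_pos hrt hρ)
  have hpp : 0 < pA γ κ0 ρm t := mul_pos hκ0 (Real.rpow_pos_of_pos hρ γ)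
  have hm : 0 < MsqA γ r0 m0 κ0 ρm t :=
    div_pos (mul_pos hρ (pow_pos hu 2)) (mul_pos hγ0 hpp)
  have hp : pA γ κ0 ρm t = ρm t * uA r0 m0 ρm t ^ 2 / (γ * MsqA γ r0 m0 κ0 ρm t) := by
    unfold MsqA
    rw [eq_div_iff (by positivity)]
    field_simp
  have hcore := core_kappa γ (ρm t) (uA r0 m0 ρm t) (MsqA γ r0 m0 κ0 ρm t)
    (pA γ κ0 ρm t) (BA γ r0 m0 κ0 ρm t) (KsA γ r0 m0 κ0 ρm t) hγ hρ hu hm hp rfl rfl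
  unfold κsA psA ρsA
  rw [hcore]
  congr 1
  unfold pA
  rw [mul_div_assoc, div_self (ne_of_gt (Real.rpow_pos_of_pos hρ γ)), mul_one]

/-- Along an incoming supersonic solution on `[0, T]` whose squared
Mach number is strictly increasing, the downstream entropy constant
`κ_s(t_s) = p_s(t_s)/ρ_s(t_s)^γ` of the Rankine–Hugoniot jump satisfies
`κ_s(t_s) > κ0` and `dκ_s/dt_s > 0` for all `t_s ∈ (0, T)`. -/
theorem stmt8 (γ r0 b0 ρ0 u0 p0 E0 T : ℝ) (b : ℝ → ℝ)
    (hγ : 1 < γ) (hr0 : 0 < r0) (hb0 : 0 < b0)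
    (hbC1 : ContDiffOn ℝ 1 b (Icc 0 r0))
    (hbpos : ∀ t ∈ Icc 0 r0, 0 < b t)
    (hbbd : ∀ t ∈ Icc 0 r0, |b t| ≤ b0 ∧ |derivWithin b (Icc 0 r0) t| ≤ b0)
    (hρ0 : 0 < ρ0) (hu0 : 0 < u0) (hp0 : 0 < p0) (hE0 : 0 < E0)
    (m0 κ0 : ℝ) (hm0 : m0 = r0 * ρ0 * u0) (hκ0 : κ0 = p0 / ρ0 ^ γ)
    (hT : 0 < T) (hTr : T < r0)
    (ρm Em : ℝ → ℝ) (hinc : IncSol γ r0 m0 κ0 ρ0 E0 T b ρm Em)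
    (hMmono : ∀ t ∈ Ioo 0 T, 0 < deriv (MsqA γ r0 m0 κ0 ρm) t) :
    ∀ ts ∈ Ioo 0 T,
      κ0 < κsA γ r0 m0 κ0 ρm ts ∧ 0 < deriv (κsA γ r0 m0 κ0 ρm) ts := by
  obtain ⟨⟨hρpos, hρ', hE'⟩, hρini, hEini, hMgt⟩ := hinc
  have hκ0pos : 0 < κ0 := by
    rw [hκ0]; exact div_pos hp0 (Real.rpow_pos_of_pos hρ0 γ)
  have hm0pos : 0 < m0 := by rw [hm0]; positivity
  have hγ0 : (0:ℝ) < γ := by linarith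
  intro ts hts
  have htsI : ts ∈ Icc 0 T := ⟨hts.1.le, hts.2.le⟩
  have hρts : 0 < ρm ts := hρpos ts htsI
  have hrts : 0 < r0 - ts := by have := hts.2; linarith
  set M : ℝ → ℝ := MsqA γ r0 m0 κ0 ρm with hMdef
  have hMts : 1 < M ts := hMgt ts htsI
  have hMts0 : 0 < M ts := by linarith
  -- eventual equality near ts
  have heq : κsA γ r0 m0 κ0 ρm =ᶠ[nhds ts] fun t => κ0 * fRH γ (M t) := by
    filter_upwards [Ioo_mem_nhds hts.1 hts.2] with t ht
    exact kappa_eq γ r0 m0 κ0 ρm t hγ (hρpos t ⟨ht.1.le, ht.2.le⟩)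
      (by have := ht.2; linarith) hm0pos hκ0pos
  -- differentiability of M at ts
  have hρd := hρ' ts htsI
  have h1 : DifferentiableAt ℝ ρm ts := hρd.differentiableAt
  have hden1 : (r0 - ts) * ρm ts ≠ 0 := ne_of_gt (mul_pos hrts hρts)
  have h2 : DifferentiableAt ℝ (fun t => (r0 - t) * ρm t) ts :=
    ((differentiableAt_const r0).sub differentiableAt_id).mul h1
  have h3 : DifferentiableAt ℝ (uA r0 m0 ρm) ts :=
    (differentiableAt_const m0).div h2 hden1
  have h4 : DifferentiableAt ℝ (fun t => pA γ κ0 ρm t) ts := by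
    simp only [pA]
    exact (h1.rpow_const (Or.inl (ne_of_gt hρts))).const_mul κ0
  have hppts : 0 < pA γ κ0 ρm ts := mul_pos hκ0pos (Real.rpow_pos_of_pos hρts γ)
  have hden2 : γ * pA γ κ0 ρm ts ≠ 0 := ne_of_gt (mul_pos hγ0 hppts)
  have hMdiff : DifferentiableAt ℝ M ts := by
    show DifferentiableAt ℝ (fun t => ρm t * uA r0 m0 ρm t ^ 2 / (γ * pA γ κ0 ρm t)) ts
    exact (h1.mul (h3.pow 2)).div ((differentiableAt_const γ).mul h4) hden2
  have hMd : HasDerivAt M (deriv M ts) ts := hMdiff.hasDerivAt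
  have hfd := fRH_hasDerivAt γ (M ts) hγ hMts0
  have hcomp : HasDerivAt (fun t => κ0 * fRH γ (M t))
      (κ0 * ((((γ - 1) * M ts + 2) / ((γ + 1) * M ts)) ^ (γ - 1) *
        (2 * γ * (γ - 1) * (M ts - 1) ^ 2) / ((γ + 1) * M ts) ^ 2 * deriv M ts)) ts :=
    (hfd.comp ts hMd).const_mul κ0
  constructor
  · rw [kappa_eq γ r0 m0 κ0 ρm ts hγ hρts hrts hm0pos hκ0pos]
    have hf1 := fRH_gt_one γ (M ts) hγ hMts
    nlinarith
  · rw [heq.deriv_eq, hcomp.deriv]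
    have hMd' : 0 < deriv M ts := hMmono ts hts
    have hA : 0 < (γ - 1) * M ts + 2 := by nlinarith
    have hD : 0 < (γ + 1) * M ts := by nlinarith
    have hfpos : 0 < (((γ - 1) * M ts + 2) / ((γ + 1) * M ts)) ^ (γ - 1) *
        (2 * γ * (γ - 1) * (M ts - 1) ^ 2) / ((γ + 1) * M ts) ^ 2 :=
      div_pos (mul_pos (Real.rpow_pos_of_pos (div_pos hA hD) _)
        (mul_pos (mul_pos (by linarith) (by linarith))
          (pow_pos (by nlinarith [hMgt ts htsI]) 2))) (by positivity)
    exact mul_pos hκ0pos (mul_pos hfpos hMd')
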